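/- Let n ≥ 1, let Sⁿ = {θ ∈ ℝⁿ : θᵢ ≥ 0 for all i, θ₁ + ⋯ + θₙ = 1} be the standard simplex, let μ : ℝⁿ → ℝ and σ² : ℝⁿ → ℝ be continuous with σ²(θ) ≥ 0 on Sⁿ, and define β(φ) = min_{θ ∈ Sⁿ} { −μ(θ) + (φ/2) σ²(θ) }. Let T > 0 and let V : ℝ × [0,T] → ℝ be such that ∂_t V, ∂_x V, ∂_x² V, ∂_x³ V, ∂_x⁴ V and the mixed derivatives ∂_t ∂_x V, ∂_t ∂_x² V exist and are continuous, ∂_x V(x,t) > 0 for all (x,t), and V solves the Hamilton–Jacobi–Bellman equation ∂_t V + max_{θ ∈ Sⁿ} { (μ(θ) − (1/2) σ²(θ)) ∂_x V + (1/2) σ²(θ) ∂_x² V } = 0 on ℝ × [0,T). Assume moreover that β is twice continuously differentiable. Then the function φ(x,t) := 1 − ∂_x² V(x,t)/∂_x V(x,t) satisfies the quasilinear parabolic equation ∂_t φ + ∂_x² β(φ) + ∂_x [ (1 − φ) β(φ) ] = 0 for all x ∈ ℝ and t ∈ [0,T). -/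

import Mathlib

set_option linter.unusedSectionVars false
set_option linter.unusedVariables false

open Set intervalIntegral MeasureTheory

/-- The diffusion function of the transformed HJB equation:
`β(φ) = min_{θ ∈ Sⁿ} { −μ(θ) + (φ/2) σ²(θ) }` over the standard simplex. -/
noncomputable def betaHJB (n : ℕ) (μ σ2 : (Fin n → ℝ) → ℝ) (φ : ℝ) : ℝ :=
  sInf ((fun θ => -μ θ + (φ / 2) * σ2 θ) '' stdSimplex ℝ (Fin n))


private noncomputable def DW1 (V : ℝ → ℝ → ℝ) (y s : ℝ) : ℝ := deriv (fun z => V z s) y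
private noncomputable def DW2 (V : ℝ → ℝ → ℝ) (y s : ℝ) : ℝ :=
  deriv (deriv (fun z => V z s)) y
private noncomputable def DW3 (V : ℝ → ℝ → ℝ) (y s : ℝ) : ℝ :=
  deriv (deriv (deriv (fun z => V z s))) y
private noncomputable def DW4 (V : ℝ → ℝ → ℝ) (y s : ℝ) : ℝ :=
  deriv (deriv (deriv (deriv (fun z => V z s)))) y
private noncomputable def DVT (V : ℝ → ℝ → ℝ) (y s : ℝ) : ℝ := deriv (fun s' => V y s') s
private noncomputable def DA1 (V : ℝ → ℝ → ℝ) (y s : ℝ) : ℝ :=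
  deriv (fun s' => DW1 V y s') s
private noncomputable def DA2 (V : ℝ → ℝ → ℝ) (y s : ℝ) : ℝ :=
  deriv (fun s' => DW2 V y s') s
private noncomputable def PSI (V : ℝ → ℝ → ℝ) (y s : ℝ) : ℝ := 1 - DW2 V y s / DW1 V y s
private noncomputable def PP (V : ℝ → ℝ → ℝ) (y s : ℝ) : ℝ :=
  ((DW2 V y s) ^ 2 - DW1 V y s * DW3 V y s) / (DW1 V y s) ^ 2
private noncomputable def QQ (V : ℝ → ℝ → ℝ) (y s : ℝ) : ℝ :=
  ((DW2 V y s * DW3 V y s - DW1 V y s * DW4 V y s) * DW1 V y s -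
    2 * DW2 V y s * ((DW2 V y s) ^ 2 - DW1 V y s * DW3 V y s)) / (DW1 V y s) ^ 3

private noncomputable def EE (n : ℕ) (μ σ2 : (Fin n → ℝ) → ℝ) (V : ℝ → ℝ → ℝ)
    (y s : ℝ) : ℝ :=
  (DW2 V y s * DA1 V y s - DW1 V y s * DA2 V y s) / (DW1 V y s) ^ 2 +
    (deriv (deriv (betaHJB n μ σ2)) (PSI V y s) * (PP V y s) ^ 2 +
      deriv (betaHJB n μ σ2) (PSI V y s) * QQ V y s) +
    PP V y s * (deriv (betaHJB n μ σ2) (PSI V y s) * (DW2 V y s / DW1 V y s) -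
      betaHJB n μ σ2 (PSI V y s))

section Calc

variable {T : ℝ} {V : ℝ → ℝ → ℝ}
variable (hdiff : ∀ x : ℝ, ∀ t ∈ Set.Icc (0 : ℝ) T,
      DifferentiableAt ℝ (fun s => V x s) t ∧
      DifferentiableAt ℝ (fun y => V y t) x ∧
      DifferentiableAt ℝ (deriv (fun y => V y t)) x ∧
      DifferentiableAt ℝ (deriv (deriv (fun y => V y t))) x ∧
      DifferentiableAt ℝ (deriv (deriv (deriv (fun y => V y t)))) x ∧
      DifferentiableAt ℝ (fun s => deriv (fun y => V y s) x) t ∧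
      DifferentiableAt ℝ (fun s => deriv (deriv (fun y => V y s)) x) t)
variable (hVxpos : ∀ x : ℝ, ∀ t ∈ Set.Icc (0 : ℝ) T, 0 < deriv (fun y => V y t) x)

include hdiff

private lemma cH1 (x : ℝ) {t : ℝ} (ht : t ∈ Set.Icc (0:ℝ) T) :
    HasDerivAt (fun z => V z t) (DW1 V x t) x :=
  (hdiff x t ht).2.1.hasDerivAt

private lemma cH2 (x : ℝ) {t : ℝ} (ht : t ∈ Set.Icc (0:ℝ) T) :
    HasDerivAt (fun z => DW1 V z t) (DW2 V x t) x :=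
  (hdiff x t ht).2.2.1.hasDerivAt

private lemma cH3 (x : ℝ) {t : ℝ} (ht : t ∈ Set.Icc (0:ℝ) T) :
    HasDerivAt (fun z => DW2 V z t) (DW3 V x t) x :=
  (hdiff x t ht).2.2.2.1.hasDerivAt

private lemma cH4 (x : ℝ) {t : ℝ} (ht : t ∈ Set.Icc (0:ℝ) T) :
    HasDerivAt (fun z => DW3 V z t) (DW4 V x t) x :=
  (hdiff x t ht).2.2.2.2.1.hasDerivAt

private lemma cHt1 (x : ℝ) {t : ℝ} (ht : t ∈ Set.Icc (0:ℝ) T) :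
    HasDerivAt (fun s => V x s) (DVT V x t) t :=
  (hdiff x t ht).1.hasDerivAt

private lemma cHt6 (x : ℝ) {t : ℝ} (ht : t ∈ Set.Icc (0:ℝ) T) :
    HasDerivAt (fun s => DW1 V x s) (DA1 V x t) t :=
  (hdiff x t ht).2.2.2.2.2.1.hasDerivAt

private lemma cHt7 (x : ℝ) {t : ℝ} (ht : t ∈ Set.Icc (0:ℝ) T) :
    HasDerivAt (fun s => DW2 V x s) (DA2 V x t) t :=
  (hdiff x t ht).2.2.2.2.2.2.hasDerivAt

include hVxpos

private lemma cW1pos (x : ℝ) {t : ℝ} (ht : t ∈ Set.Icc (0:ℝ) T) : 0 < DW1 V x t :=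
  hVxpos x t ht

private lemma cL6 (x : ℝ) {t : ℝ} (ht : t ∈ Set.Icc (0:ℝ) T) :
    HasDerivAt (fun z => DW2 V z t / DW1 V z t) (-(PP V x t)) x := by
  have h := (cH3 hdiff x ht).div (cH2 hdiff x ht) (ne_of_gt (cW1pos hdiff hVxpos x ht))
  refine h.congr_deriv ?_
  have hw1 : DW1 V x t ≠ 0 := ne_of_gt (cW1pos hdiff hVxpos x ht)
  rw [PP]
  field_simp
  ring

private lemma cL1 (x : ℝ) {t : ℝ} (ht : t ∈ Set.Icc (0:ℝ) T) :
    HasDerivAt (fun z => PSI V z t) (PP V x t) x := by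
  have h := (cL6 hdiff hVxpos x ht).const_sub 1
  simpa [PSI] using h

private lemma cPP (x : ℝ) {t : ℝ} (ht : t ∈ Set.Icc (0:ℝ) T) :
    HasDerivAt (fun z => PP V z t) (QQ V x t) x := by
  have hnum : HasDerivAt (fun z => (DW2 V z t) ^ 2 - DW1 V z t * DW3 V z t)
      (2 * DW2 V x t ^ 1 * DW3 V x t -
        (DW2 V x t * DW3 V x t + DW1 V x t * DW4 V x t)) x := by
    have h1 := ((cH3 hdiff x ht)).pow 2
    have h2 := (cH2 hdiff x ht).mul (cH4 hdiff x ht)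
    have h3 : HasDerivAt ((fun z => DW2 V z t) ^ 2 - (fun z => DW1 V z t) * fun z => DW3 V z t)
        (2 * DW2 V x t ^ 1 * DW3 V x t -
          (DW2 V x t * DW3 V x t + DW1 V x t * DW4 V x t)) x := by
      simpa using h1.sub h2
    exact h3
  have hden : HasDerivAt (fun z => (DW1 V z t) ^ 2)
      (2 * DW1 V x t ^ 1 * DW2 V x t) x := (cH2 hdiff x ht).pow 2
  have hw1 : DW1 V x t ≠ 0 := ne_of_gt (cW1pos hdiff hVxpos x ht)
  have h := hnum.div hden (by positivity)
  refine h.congr_deriv ?_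
  rw [QQ]
  field_simp
  ring


variable {n : ℕ} {μ σ2 : (Fin n → ℝ) → ℝ} (hβ : ContDiff ℝ 2 (betaHJB n μ σ2))

include hβ

omit hdiff hVxpos in
private lemma cBd1 : Differentiable ℝ (betaHJB n μ σ2) :=
  hβ.differentiable (by norm_num)

omit hdiff hVxpos in
private lemma cBC1 : ContDiff ℝ 1 (deriv (betaHJB n μ σ2)) := by
  have h2 : ContDiff ℝ ((1 : WithTop ℕ∞) + 1) (betaHJB n μ σ2) := by
    have : ((1 : WithTop ℕ∞) + 1) = 2 := by norm_num
    rw [this]; exact hβ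
  exact (contDiff_succ_iff_deriv.mp h2).2.2

private lemma cL2 (x : ℝ) {t : ℝ} (ht : t ∈ Set.Icc (0:ℝ) T) :
    HasDerivAt (fun z => betaHJB n μ σ2 (PSI V z t))
      (deriv (betaHJB n μ σ2) (PSI V x t) * PP V x t) x := by
  have hB : HasDerivAt (betaHJB n μ σ2) (deriv (betaHJB n μ σ2) (PSI V x t))
      (PSI V x t) := ((cBd1 hβ) (PSI V x t)).hasDerivAt
  exact HasDerivAt.comp (h := fun z => PSI V z t) x hB (cL1 hdiff hVxpos x ht)

private lemma cL3 (x : ℝ) {t : ℝ} (ht : t ∈ Set.Icc (0:ℝ) T) :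
    HasDerivAt (fun y => deriv (betaHJB n μ σ2) (PSI V y t) * PP V y t)
      (deriv (deriv (betaHJB n μ σ2)) (PSI V x t) * (PP V x t) ^ 2 +
        deriv (betaHJB n μ σ2) (PSI V x t) * QQ V x t) x := by
  have hc : HasDerivAt (fun z => deriv (betaHJB n μ σ2) (PSI V z t))
      (deriv (deriv (betaHJB n μ σ2)) (PSI V x t) * PP V x t) x := by
    have hB : HasDerivAt (deriv (betaHJB n μ σ2))
        (deriv (deriv (betaHJB n μ σ2)) (PSI V x t)) (PSI V x t) :=
      (((cBC1 hβ).differentiable (by norm_num)) (PSI V x t)).hasDerivAt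
    exact HasDerivAt.comp (h := fun z => PSI V z t) x hB (cL1 hdiff hVxpos x ht)
  have h := hc.mul (cPP hdiff hVxpos x ht)
  refine h.congr_deriv ?_
  ring

private lemma cL4 (x : ℝ) {t : ℝ} (ht : t ∈ Set.Icc (0:ℝ) T) :
    HasDerivAt (fun z => (1 - PSI V z t) * betaHJB n μ σ2 (PSI V z t))
      (PP V x t * (deriv (betaHJB n μ σ2) (PSI V x t) * (DW2 V x t / DW1 V x t) -
        betaHJB n μ σ2 (PSI V x t))) x := by
  have h := ((cL1 hdiff hVxpos x ht).const_sub 1).mul (cL2 hdiff hVxpos hβ x ht)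
  refine h.congr_deriv ?_
  simp only [PSI]
  ring

omit hβ

private lemma cL5 (x : ℝ) {t : ℝ} (ht : t ∈ Set.Icc (0:ℝ) T) :
    HasDerivAt (fun s => PSI V x s)
      ((DW2 V x t * DA1 V x t - DW1 V x t * DA2 V x t) / (DW1 V x t) ^ 2) t := by
  have h := ((cHt7 hdiff x ht).div (cHt6 hdiff x ht)
    (ne_of_gt (cW1pos hdiff hVxpos x ht))).const_sub 1
  refine h.congr_deriv ?_
  ring

end Calc


private lemma slice_x {T : ℝ} {f : ℝ → ℝ → ℝ}
    (hc : ContinuousOn (fun p : ℝ × ℝ => f p.1 p.2) (Set.univ ×ˢ Set.Icc 0 T))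
    {s : ℝ} (hs : s ∈ Set.Icc (0:ℝ) T) : Continuous (fun z => f z s) := by
  rw [← continuousOn_univ]
  exact hc.comp (continuous_id.prodMk continuous_const).continuousOn
    (fun z _ => ⟨trivial, hs⟩)

private lemma slice_t {T : ℝ} {f : ℝ → ℝ → ℝ}
    (hc : ContinuousOn (fun p : ℝ × ℝ => f p.1 p.2) (Set.univ ×ˢ Set.Icc 0 T))
    (x : ℝ) : ContinuousOn (fun s => f x s) (Set.Icc (0:ℝ) T) :=
  hc.comp (continuous_const.prodMk continuous_id).continuousOn
    (fun s hs => ⟨trivial, hs⟩)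

private lemma clairaut_aux {T : ℝ}
    (g gx gt gtx : ℝ → ℝ → ℝ)
    (hgx : ∀ y : ℝ, ∀ s ∈ Set.Icc (0:ℝ) T, HasDerivAt (fun z => g z s) (gx y s) y)
    (hgt : ∀ y : ℝ, ∀ s ∈ Set.Icc (0:ℝ) T, HasDerivAt (fun s' => g y s') (gt y s) s)
    (hgtx : ∀ y : ℝ, ∀ s ∈ Set.Icc (0:ℝ) T, HasDerivAt (fun s' => gx y s') (gtx y s) s)
    (hcx : ContinuousOn (fun p : ℝ × ℝ => gx p.1 p.2) (Set.univ ×ˢ Set.Icc 0 T))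
    (hctx : ContinuousOn (fun p : ℝ × ℝ => gtx p.1 p.2) (Set.univ ×ˢ Set.Icc 0 T))
    {t : ℝ} (ht : t ∈ Set.Ioo (0:ℝ) T) (x : ℝ) :
    HasDerivAt (fun y => gt y t) (gtx x t) x := by
  obtain ⟨ht0, htT⟩ := ht
  set ε : ℝ := min t (T - t) with hε
  have hεpos : 0 < ε := lt_min ht0 (by linarith)
  have hball : Metric.ball t ε ⊆ Set.Icc (0:ℝ) T := by
    intro s hs
    rw [Real.ball_eq_Ioo] at hs
    constructor
    · have := hs.1; have h1 : ε ≤ t := min_le_left _ _; linarith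
    · have := hs.2; have h2 : ε ≤ T - t := min_le_right _ _; linarith
  have htmem : t ∈ Set.Icc (0:ℝ) T := ⟨le_of_lt ht0, le_of_lt htT⟩
  -- key claim
  have key : ∀ y : ℝ, gt y t - gt x t = ∫ z in x..y, gtx z t := by
    intro y
    -- the compact box
    obtain ⟨C, hC⟩ : ∃ C, ∀ p ∈ Set.uIcc x y ×ˢ Metric.closedBall t ε,
        ‖gtx p.1 p.2‖ ≤ C := by
      have hK : IsCompact (Set.uIcc x y ×ˢ Metric.closedBall t ε) :=
        isCompact_uIcc.prod (isCompact_closedBall t ε)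
      have hcont : ContinuousOn (fun p : ℝ × ℝ => gtx p.1 p.2)
          (Set.uIcc x y ×ˢ Metric.closedBall t ε) := by
        apply hctx.mono
        intro p hp
        refine ⟨trivial, ?_⟩
        have : p.2 ∈ Metric.closedBall t ε := hp.2
        rw [Metric.mem_closedBall, Real.dist_eq, abs_le] at this
        have h1 : ε ≤ t := min_le_left _ _
        have h2 : ε ≤ T - t := min_le_right _ _
        constructor <;> linarith [this.1, this.2]
      obtain ⟨C, hC⟩ := hK.exists_bound_of_continuousOn hcont
      exact ⟨C, hC⟩
    have hJ : HasDerivAt (fun s => ∫ z in x..y, gx z s) (∫ z in x..y, gtx z t) t := by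
      have := intervalIntegral.hasDerivAt_integral_of_dominated_loc_of_deriv_le
        (𝕜 := ℝ) (μ := volume) (F := fun s z => gx z s) (F' := fun s z => gtx z s)
        (a := x) (b := y) (x₀ := t) (bound := fun _ => C) (Metric.ball_mem_nhds t hεpos)
        ?_ ?_ ?_ ?_ ?_ ?_
      · exact this.2
      · filter_upwards [Metric.ball_mem_nhds t hεpos] with s hs
        exact ((slice_x hcx (hball hs)).aestronglyMeasurable).restrict
      · exact (slice_x hcx htmem).intervalIntegrable x y
      · exact ((slice_x hctx htmem).aestronglyMeasurable).restrict
      · filter_upwards with z hz s hs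
        have hzK : z ∈ Set.uIcc x y := Set.uIoc_subset_uIcc hz
        exact hC (z, s) ⟨hzK, Metric.ball_subset_closedBall hs⟩
      · exact intervalIntegrable_const
      · filter_upwards with z hz s hs
        exact hgtx z s (hball hs)
    have hI : HasDerivAt (fun s => g y s - g x s) (gt y t - gt x t) t :=
      (hgt y t htmem).sub (hgt x t htmem)
    have heq : (fun s => g y s - g x s) =ᶠ[nhds t] (fun s => ∫ z in x..y, gx z s) := by
      filter_upwards [Metric.ball_mem_nhds t hεpos] with s hs
      have hsI := hball hs
      symm
      apply intervalIntegral.integral_eq_sub_of_hasDerivAt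
      · intro z _
        exact hgx z s hsI
      · exact (slice_x hcx hsI).intervalIntegrable x y
    have := hI.congr_of_eventuallyEq heq.symm
    exact this.unique hJ
  -- conclude by FTC-1
  have hFTC : HasDerivAt (fun u => ∫ z in x..u, gtx z t) (gtx x t) x := by
    apply intervalIntegral.integral_hasDerivAt_right
    · exact (slice_x hctx htmem).intervalIntegrable x x
    · exact (slice_x hctx htmem).stronglyMeasurable.stronglyMeasurableAtFilter
    · exact (slice_x hctx htmem).continuousAt
  have : (fun y => gt y t) = fun y => gt x t + ∫ z in x..y, gtx z t := by
    funext y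
    have := key y
    linarith
  rw [this]
  simpa using (hFTC.const_add (gt x t))

private lemma hjb_sup {n : ℕ} (hn : 1 ≤ n) (μ σ2 : (Fin n → ℝ) → ℝ)
    (hμ : Continuous μ) (hσ2 : Continuous σ2) (w1 w2 : ℝ) (hw1 : 0 < w1) :
    sSup ((fun θ => (μ θ - (1/2) * σ2 θ) * w1 + (1/2) * σ2 θ * w2) '' stdSimplex ℝ (Fin n))
      = -(w1 * betaHJB n μ σ2 (1 - w2 / w1)) := by
  set φv : ℝ := 1 - w2 / w1 with hφv
  have hw2 : w2 = (1 - φv) * w1 := by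
    rw [hφv, sub_sub_cancel, div_mul_cancel₀ _ hw1.ne']
  set g : (Fin n → ℝ) → ℝ := fun θ => -μ θ + (φv / 2) * σ2 θ with hg
  have hgc : Continuous g := hμ.neg.add ((continuous_const (y := φv / 2)).mul hσ2)
  have hS : (stdSimplex ℝ (Fin n)).Nonempty := by
    refine ⟨fun _ => (n : ℝ)⁻¹, fun i => by positivity, ?_⟩
    rw [Finset.sum_const, Finset.card_univ, Fintype.card_fin, nsmul_eq_mul]
    have : (n : ℝ) ≠ 0 := by exact_mod_cast Nat.one_le_iff_ne_zero.mp hn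
    field_simp
  obtain ⟨θs, hθsS, hθmin⟩ := (isCompact_stdSimplex ℝ (Fin n)).exists_isMinOn hS
    hgc.continuousOn
  have hinf : betaHJB n μ σ2 φv = g θs := by
    rw [betaHJB]
    apply IsLeast.csInf_eq
    constructor
    · exact ⟨θs, hθsS, rfl⟩
    · rintro b ⟨θ, hθ, rfl⟩
      exact hθmin hθ
  have hpt : ∀ θ, (μ θ - (1/2) * σ2 θ) * w1 + (1/2) * σ2 θ * w2 = -(w1 * g θ) := by
    intro θ
    rw [hw2, hg]
    ring
  rw [hinf]
  apply IsGreatest.csSup_eq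
  constructor
  · exact ⟨θs, hθsS, hpt θs⟩
  · rintro b ⟨θ, hθ, rfl⟩
    simp only
    rw [hpt θ]
    have : g θs ≤ g θ := hθmin hθ
    nlinarith


/-- Riccati transformation of the Hamilton–Jacobi–Bellman equation: if `V` solves
`∂_t V + max_{θ ∈ Sⁿ} { (μ(θ) − σ²(θ)/2) ∂_x V + (σ²(θ)/2) ∂_x² V } = 0` with
`∂_x V > 0`, then `φ = 1 − ∂_x² V / ∂_x V` solves the quasilinear equation
`∂_t φ + ∂_x² β(φ) + ∂_x [(1 − φ) β(φ)] = 0`. -/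
theorem hjb_riccati_transformation
    (n : ℕ) (hn : 1 ≤ n)
    (μ σ2 : (Fin n → ℝ) → ℝ) (hμ : Continuous μ) (hσ2 : Continuous σ2)
    (hσ2nonneg : ∀ θ ∈ stdSimplex ℝ (Fin n), 0 ≤ σ2 θ)
    (T : ℝ) (hT : 0 < T)
    (V : ℝ → ℝ → ℝ)
    -- existence of the partial derivatives ∂_t V, ∂_x V, ∂_x² V, ∂_x³ V, ∂_x⁴ V
    -- and of the mixed derivatives ∂_t ∂_x V, ∂_t ∂_x² V on ℝ × [0,T]
    (hdiff : ∀ x : ℝ, ∀ t ∈ Set.Icc (0 : ℝ) T,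
      DifferentiableAt ℝ (fun s => V x s) t ∧
      DifferentiableAt ℝ (fun y => V y t) x ∧
      DifferentiableAt ℝ (deriv (fun y => V y t)) x ∧
      DifferentiableAt ℝ (deriv (deriv (fun y => V y t))) x ∧
      DifferentiableAt ℝ (deriv (deriv (deriv (fun y => V y t)))) x ∧
      DifferentiableAt ℝ (fun s => deriv (fun y => V y s) x) t ∧
      DifferentiableAt ℝ (fun s => deriv (deriv (fun y => V y s)) x) t)
    -- continuity of those partial derivatives on ℝ × [0,T]
    (hcont_t : ContinuousOn (fun p : ℝ × ℝ => deriv (fun s => V p.1 s) p.2)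
      (Set.univ ×ˢ Set.Icc 0 T))
    (hcont_x : ContinuousOn (fun p : ℝ × ℝ => deriv (fun y => V y p.2) p.1)
      (Set.univ ×ˢ Set.Icc 0 T))
    (hcont_xx : ContinuousOn (fun p : ℝ × ℝ => deriv (deriv (fun y => V y p.2)) p.1)
      (Set.univ ×ˢ Set.Icc 0 T))
    (hcont_xxx :
      ContinuousOn (fun p : ℝ × ℝ => deriv (deriv (deriv (fun y => V y p.2))) p.1)
      (Set.univ ×ˢ Set.Icc 0 T))
    (hcont_xxxx :
      ContinuousOn
        (fun p : ℝ × ℝ => deriv (deriv (deriv (deriv (fun y => V y p.2)))) p.1)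
      (Set.univ ×ˢ Set.Icc 0 T))
    (hcont_tx : ContinuousOn
      (fun p : ℝ × ℝ => deriv (fun s => deriv (fun y => V y s) p.1) p.2)
      (Set.univ ×ˢ Set.Icc 0 T))
    (hcont_txx : ContinuousOn
      (fun p : ℝ × ℝ => deriv (fun s => deriv (deriv (fun y => V y s)) p.1) p.2)
      (Set.univ ×ˢ Set.Icc 0 T))
    -- positivity of ∂_x V
    (hVxpos : ∀ x : ℝ, ∀ t ∈ Set.Icc (0 : ℝ) T, 0 < deriv (fun y => V y t) x)
    -- V solves the HJB equation on ℝ × [0,T)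
    (hHJB : ∀ x : ℝ, ∀ t ∈ Set.Ico (0 : ℝ) T,
      deriv (fun s => V x s) t +
        sSup ((fun θ => (μ θ - (1 / 2) * σ2 θ) * deriv (fun y => V y t) x +
          (1 / 2) * σ2 θ * deriv (deriv (fun y => V y t)) x) ''
            stdSimplex ℝ (Fin n)) = 0)
    -- β is assumed twice continuously differentiable
    (hβ : ContDiff ℝ 2 (betaHJB n μ σ2))
    -- φ is the Riccati transform
    (φ : ℝ → ℝ → ℝ)
    (hφ : ∀ x t : ℝ, φ x t =
      1 - deriv (deriv (fun y => V y t)) x / deriv (fun y => V y t) x) :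
    ∀ x : ℝ, ∀ t ∈ Set.Ico (0 : ℝ) T,
      deriv (fun s => φ x s) t +
        deriv (deriv (fun y => betaHJB n μ σ2 (φ y t))) x +
        deriv (fun y => (1 - φ y t) * betaHJB n μ σ2 (φ y t)) x = 0 := by
  intro x t htIco
  have hφψ : ∀ y s : ℝ, φ y s = PSI V y s := fun y s => by rw [hφ]; rfl
  -- Step 1: the LHS equals the closed form `EE` for every t ∈ [0,T]
  have hmain : ∀ t' ∈ Set.Icc (0:ℝ) T,
      deriv (fun s => φ x s) t' +
        deriv (deriv (fun y => betaHJB n μ σ2 (φ y t'))) x +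
        deriv (fun y => (1 - φ y t') * betaHJB n μ σ2 (φ y t')) x
        = EE n μ σ2 V x t' := by
    intro t' ht'
    have e1 : (fun s => φ x s) = fun s => PSI V x s := funext fun s => hφψ x s
    have e2 : (fun y => betaHJB n μ σ2 (φ y t'))
        = fun y => betaHJB n μ σ2 (PSI V y t') := funext fun y => by rw [hφψ]
    have e3 : (fun y => (1 - φ y t') * betaHJB n μ σ2 (φ y t'))
        = fun y => (1 - PSI V y t') * betaHJB n μ σ2 (PSI V y t') :=
      funext fun y => by rw [hφψ]
    rw [e1, e2, e3]
    have hinner : deriv (fun y => betaHJB n μ σ2 (PSI V y t'))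
        = fun y => deriv (betaHJB n μ σ2) (PSI V y t') * PP V y t' :=
      funext fun y => (cL2 hdiff hVxpos hβ y ht').deriv
    rw [(cL5 hdiff hVxpos x ht').deriv, hinner,
      (cL3 hdiff hVxpos hβ x ht').deriv, (cL4 hdiff hVxpos hβ x ht').deriv]
    rfl
  -- Step 2: `EE` vanishes on the interior (0,T), using the HJB equation
  have hEzero : ∀ y : ℝ, ∀ t' ∈ Set.Ioo (0:ℝ) T, EE n μ σ2 V y t' = 0 := by
    intro y t' ht'
    have htIcc : t' ∈ Set.Icc (0:ℝ) T := ⟨le_of_lt ht'.1, le_of_lt ht'.2⟩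
    -- the HJB equation in Riccati form
    have hVt : ∀ z : ℝ, ∀ s ∈ Set.Ico (0:ℝ) T,
        DVT V z s = DW1 V z s * betaHJB n μ σ2 (PSI V z s) := by
      intro z s hs
      have h : DVT V z s +
          sSup ((fun θ => (μ θ - (1/2) * σ2 θ) * DW1 V z s +
            (1/2) * σ2 θ * DW2 V z s) '' stdSimplex ℝ (Fin n)) = 0 := hHJB z s hs
      rw [hjb_sup hn μ σ2 hμ hσ2 (DW1 V z s) (DW2 V z s)
        (hVxpos z s (Set.Ico_subset_Icc_self hs))] at h
      have hψ : PSI V z s = 1 - DW2 V z s / DW1 V z s := rfl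
      rw [hψ]
      linarith
    -- Clairaut: ∂_x ∂_t V = ∂_t ∂_x V
    have HD1 : ∀ z : ℝ, HasDerivAt (fun w => DVT V w t') (DA1 V z t') z := fun z =>
      clairaut_aux V (DW1 V) (DVT V) (DA1 V)
        (fun w s hs => cH1 hdiff w hs) (fun w s hs => cHt1 hdiff w hs)
        (fun w s hs => cHt6 hdiff w hs) hcont_x hcont_tx ht' z
    have HD2 : ∀ z : ℝ, HasDerivAt (fun w => DA1 V w t') (DA2 V z t') z := fun z =>
      clairaut_aux (DW1 V) (DW2 V) (DA1 V) (DA2 V)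
        (fun w s hs => cH2 hdiff w hs) (fun w s hs => cHt6 hdiff w hs)
        (fun w s hs => cHt7 hdiff w hs) hcont_xx hcont_txx ht' z
    -- first differentiated HJB identity
    have star : ∀ z : ℝ, DA1 V z t' =
        DW2 V z t' * betaHJB n μ σ2 (PSI V z t') +
          DW1 V z t' * (deriv (betaHJB n μ σ2) (PSI V z t') * PP V z t') := by
      intro z
      have hfun : (fun w => DVT V w t')
          = fun w => DW1 V w t' * betaHJB n μ σ2 (PSI V w t') :=
        funext fun w => hVt w t' ⟨le_of_lt ht'.1, ht'.2⟩
      have h1 : HasDerivAt (fun w => DW1 V w t' * betaHJB n μ σ2 (PSI V w t'))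
          (DA1 V z t') z := hfun ▸ HD1 z
      exact h1.unique ((cH2 hdiff z htIcc).mul (cL2 hdiff hVxpos hβ z htIcc))
    -- two computations of the derivative of A1/W1
    have hR1 : HasDerivAt (fun w => DA1 V w t' / DW1 V w t')
        ((DA2 V y t' * DW1 V y t' - DA1 V y t' * DW2 V y t') / (DW1 V y t') ^ 2)
        y := (HD2 y).div (cH2 hdiff y htIcc) (ne_of_gt (hVxpos y t' htIcc))
    have hRfun : (fun w => DA1 V w t' / DW1 V w t') = fun w =>
        deriv (betaHJB n μ σ2) (PSI V w t') * PP V w t' +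
          (DW2 V w t' / DW1 V w t') * betaHJB n μ σ2 (PSI V w t') := by
      funext w
      rw [star w]
      have hw : DW1 V w t' ≠ 0 := ne_of_gt (hVxpos w t' htIcc)
      field_simp
      ring
    have hR2 : HasDerivAt (fun w => DA1 V w t' / DW1 V w t')
        ((deriv (deriv (betaHJB n μ σ2)) (PSI V y t') * (PP V y t') ^ 2 +
          deriv (betaHJB n μ σ2) (PSI V y t') * QQ V y t') +
          ((-(PP V y t')) * betaHJB n μ σ2 (PSI V y t') +
            (DW2 V y t' / DW1 V y t') *
              (deriv (betaHJB n μ σ2) (PSI V y t') * PP V y t'))) y := by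
      rw [hRfun]
      exact (cL3 hdiff hVxpos hβ y htIcc).add
        ((cL6 hdiff hVxpos y htIcc).mul (cL2 hdiff hVxpos hβ y htIcc))
    have hkey := hR1.unique hR2
    simp only [EE]
    linear_combination -hkey
  -- Step 3: conclude, treating t = 0 by continuity
  rcases eq_or_lt_of_le htIco.1 with h0 | h0
  · -- t = 0
    have ht0 : t = 0 := h0.symm
    have h0T : (0:ℝ) ∈ Set.Icc (0:ℝ) T := ⟨le_refl 0, le_of_lt hT⟩
    -- continuity of EE x · on [0,T]
    have cw1 : ContinuousOn (fun s => DW1 V x s) (Set.Icc 0 T) :=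
      slice_t (f := DW1 V) hcont_x x
    have cw2 : ContinuousOn (fun s => DW2 V x s) (Set.Icc 0 T) :=
      slice_t (f := DW2 V) hcont_xx x
    have cw3 : ContinuousOn (fun s => DW3 V x s) (Set.Icc 0 T) :=
      slice_t (f := DW3 V) hcont_xxx x
    have cw4 : ContinuousOn (fun s => DW4 V x s) (Set.Icc 0 T) :=
      slice_t (f := DW4 V) hcont_xxxx x
    have ca1 : ContinuousOn (fun s => DA1 V x s) (Set.Icc 0 T) :=
      slice_t (f := DA1 V) hcont_tx x
    have ca2 : ContinuousOn (fun s => DA2 V x s) (Set.Icc 0 T) :=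
      slice_t (f := DA2 V) hcont_txx x
    have hw1ne : ∀ s ∈ Set.Icc (0:ℝ) T, DW1 V x s ≠ 0 :=
      fun s hs => ne_of_gt (hVxpos x s hs)
    have cψ : ContinuousOn (fun s => PSI V x s) (Set.Icc 0 T) :=
      continuousOn_const.sub (cw2.div cw1 hw1ne)
    have cPPc : ContinuousOn (fun s => PP V x s) (Set.Icc 0 T) :=
      ((cw2.pow 2).sub (cw1.mul cw3)).div (cw1.pow 2)
        (fun s hs => pow_ne_zero _ (hw1ne s hs))
    have cQQc : ContinuousOn (fun s => QQ V x s) (Set.Icc 0 T) :=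
      ((((cw2.mul cw3).sub (cw1.mul cw4)).mul cw1).sub
        ((continuousOn_const.mul cw2).mul ((cw2.pow 2).sub (cw1.mul cw3)))).div
        (cw1.pow 3) (fun s hs => pow_ne_zero _ (hw1ne s hs))
    have cB : Continuous (betaHJB n μ σ2) := hβ.continuous
    have cB' : Continuous (deriv (betaHJB n μ σ2)) := (cBC1 hβ).continuous
    have cB'' : Continuous (deriv (deriv (betaHJB n μ σ2))) :=
      (cBC1 hβ).continuous_deriv le_rfl
    have hce : ContinuousOn (fun s => EE n μ σ2 V x s) (Set.Icc 0 T) := by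
      simp only [EE]
      refine ContinuousOn.add (ContinuousOn.add ?_ ?_) ?_
      · exact ((cw2.mul ca1).sub (cw1.mul ca2)).div (cw1.pow 2)
          (fun s hs => pow_ne_zero _ (hw1ne s hs))
      · exact ((cB''.comp_continuousOn cψ).mul (cPPc.pow 2)).add
          ((cB'.comp_continuousOn cψ).mul cQQc)
      · exact cPPc.mul (((cB'.comp_continuousOn cψ).mul
          (cw2.div cw1 hw1ne)).sub (cB.comp_continuousOn cψ))
    -- the limit argument
    have hmem : (0:ℝ) ∈ closure (Set.Ioo (0:ℝ) T) := by
      rw [closure_Ioo (ne_of_lt hT)]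
      exact h0T
    have hnb : (nhdsWithin (0:ℝ) (Set.Ioo (0:ℝ) T)).NeBot :=
      mem_closure_iff_nhdsWithin_neBot.mp hmem
    have hlim1 : Filter.Tendsto (fun s => EE n μ σ2 V x s)
        (nhdsWithin (0:ℝ) (Set.Ioo (0:ℝ) T)) (nhds (EE n μ σ2 V x 0)) :=
      (hce 0 h0T).mono Set.Ioo_subset_Icc_self
    have hlim2 : Filter.Tendsto (fun s => EE n μ σ2 V x s)
        (nhdsWithin (0:ℝ) (Set.Ioo (0:ℝ) T)) (nhds 0) := by
      apply Filter.Tendsto.congr' _ tendsto_const_nhds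
      filter_upwards [self_mem_nhdsWithin] with s hs
      exact (hEzero x s hs).symm
    have hE0 : EE n μ σ2 V x 0 = 0 := tendsto_nhds_unique hlim1 hlim2
    rw [ht0, hmain 0 h0T]
    exact hE0
  · rw [hmain t ⟨htIco.1, le_of_lt htIco.2⟩]
    exact hEzero x t ⟨h0, htIco.2⟩
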